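/- There exists a two-player quantitative game played on a finite graph with an initial vertex that admits a weak subgame perfect equilibrium but no subgame perfect equilibrium. Concretely, in the game with vertices v_0 (player 1), v_1 (player 2), v_2, v_3, edges v_0→v_1, v_0→v_2, v_1→v_0, v_1→v_3, v_2→v_2, v_3→v_3, and costs determined by the ending cycle — plays ending in v_2^ω cost (1,2), plays ending in v_3^ω cost (0,1), and the play (v_0v_1)^ω costs (2,0) — the game from v_0 has a weak SPE but no SPE. -/

import Mathlib

open Classical

noncomputable section

/-- A multiplayer turn-based quantitative game on a directed graph:
`owner` assigns each vertex to a player, `E` is the edge relation (every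
vertex has a successor), and `cost i` is player `i`'s cost function on
infinite sequences of vertices (to be minimized), valued in `ℝ ∪ {±∞}`. -/
structure QGame (P V : Type) where
  owner : V → P
  E : V → V → Prop
  succ_exists : ∀ v, ∃ v', E v v'
  cost : P → (ℕ → V) → EReal

namespace QGame

variable {P V : Type}

/-- An infinite play of the game: consecutive vertices are joined by edges. -/
def IsPlay (G : QGame P V) (ρ : ℕ → V) : Prop := ∀ n, G.E (ρ n) (ρ (n + 1))

/-- Concatenation `hρ` of a finite history `h` with an infinite play `ρ`. -/
def prepend (h : List V) (ρ : ℕ → V) : ℕ → V := fun n =>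
  if hn : n < h.length then h.get ⟨n, hn⟩ else ρ (n - h.length)

/-- The prefix of length `n` of a play, as a list. -/
def playPrefix (ρ : ℕ → V) (n : ℕ) : List V := List.ofFn fun k : Fin n => ρ k

/-- `hv` is a history of the game initialized at `v0`: here `h` is the strict
past and `v` the current vertex; the sequence `h ++ [v]` starts at `v0` and
follows edges. -/
def IsHist (G : QGame P V) (v0 : V) (h : List V) (v : V) : Prop :=
  (h ++ [v]).head? = some v0 ∧ List.Chain' G.E (h ++ [v])

/-- A (turn-based) strategy profile: given the past history and the current
vertex, choose the next vertex.  An individual strategy of player `i` is of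
the same type; only its values at vertices owned by `i` matter. -/
abbrev Strat (P V : Type) := List V → V → V

/-- A profile/strategy is valid if it always follows edges. -/
def Valid (G : QGame P V) (σ : Strat P V) : Prop := ∀ h v, G.E v (σ h v)

/-- History/current-vertex pair produced after `n` steps of `σ` from `v`. -/
def outcomeAux (σ : Strat P V) (v : V) : ℕ → List V × V
  | 0 => ([], v)
  | n + 1 =>
      let p := outcomeAux σ v n
      (p.1 ++ [p.2], σ p.1 p.2)

/-- The outcome play of profile `σ` from initial vertex `v`. -/
def outcome (σ : Strat P V) (v : V) (n : ℕ) : V := (outcomeAux σ v n).2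

/-- The profile where player `i` unilaterally deviates to strategy `τ`
from the profile `σ`. -/
def devProf (G : QGame P V) (σ τ : Strat P V) (i : P) : Strat P V :=
  fun h v => if G.owner v = i then τ h v else σ h v

/-- The set of deviation steps of `τ` from `σ` (for player `i`, from `v`):
positions `n` along the outcome of the deviated profile where the current
vertex belongs to player `i` and `τ` disagrees with `σ`. -/
def devSteps (G : QGame P V) (σ τ : Strat P V) (i : P) (v : V) : Set ℕ :=
  {n | G.owner (outcome (G.devProf σ τ i) v n) = i ∧
       σ (outcomeAux (G.devProf σ τ i) v n).1 (outcome (G.devProf σ τ i) v n) ≠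
       τ (outcomeAux (G.devProf σ τ i) v n).1 (outcome (G.devProf σ τ i) v n)}

/-- `τ` is finitely deviating from `σ`. -/
def FinDev (G : QGame P V) (σ τ : Strat P V) (i : P) (v : V) : Prop :=
  (G.devSteps σ τ i v).Finite

/-- `τ` is one-shot deviating from `σ`: its unique deviation step is at the
initial vertex. -/
def OneShotDev (G : QGame P V) (σ τ : Strat P V) (i : P) (v : V) : Prop :=
  G.devSteps σ τ i v = {0}

/-- Nash equilibrium of the profile `σ` from `v`, with respect to a cost
assignment `c` (no player has a profitable unilateral deviation). -/
def IsNEwith (G : QGame P V) (c : P → (ℕ → V) → EReal) (σ : Strat P V) (v : V) : Prop :=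
  ∀ i τ, G.Valid τ →
    c i (outcome σ v) ≤ c i (outcome (G.devProf σ τ i) v)

/-- Weak Nash equilibrium: no profitable finitely deviating strategy. -/
def IsWeakNEwith (G : QGame P V) (c : P → (ℕ → V) → EReal) (σ : Strat P V) (v : V) : Prop :=
  ∀ i τ, G.Valid τ → G.FinDev σ τ i v →
    c i (outcome σ v) ≤ c i (outcome (G.devProf σ τ i) v)

/-- Very weak Nash equilibrium: no profitable one-shot deviating strategy. -/
def IsVeryWeakNEwith (G : QGame P V) (c : P → (ℕ → V) → EReal) (σ : Strat P V) (v : V) : Prop :=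
  ∀ i τ, G.Valid τ → G.OneShotDev σ τ i v →
    c i (outcome σ v) ≤ c i (outcome (G.devProf σ τ i) v)

/-- The strategy profile induced by `σ` in the subgame after history `h`. -/
def subStrat (σ : Strat P V) (h : List V) : Strat P V := fun g v => σ (h ++ g) v

/-- The cost functions of the subgame after history `h`. -/
def subCost (G : QGame P V) (h : List V) : P → (ℕ → V) → EReal :=
  fun i ρ => G.cost i (prepend h ρ)

/-- Subgame perfect equilibrium: Nash equilibrium in every subgame. -/
def IsSPE (G : QGame P V) (v0 : V) (σ : Strat P V) : Prop :=
  ∀ h v, G.IsHist v0 h v → G.IsNEwith (G.subCost h) (subStrat σ h) v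

/-- Weak subgame perfect equilibrium: weak NE in every subgame. -/
def IsWeakSPE (G : QGame P V) (v0 : V) (σ : Strat P V) : Prop :=
  ∀ h v, G.IsHist v0 h v → G.IsWeakNEwith (G.subCost h) (subStrat σ h) v

/-- Very weak subgame perfect equilibrium: very weak NE in every subgame. -/
def IsVeryWeakSPE (G : QGame P V) (v0 : V) (σ : Strat P V) : Prop :=
  ∀ h v, G.IsHist v0 h v → G.IsVeryWeakNEwith (G.subCost h) (subStrat σ h) v

/-- One elimination step: `ρ` (a potential outcome in the subgame after `h`)
is erased if some player `i` controlling a vertex `ρ n` along `hρ` has an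
alternative edge to some `v' ≠ ρ (n+1)` such that every play `ρ'` in the
current potential set after the extended history gives `i` a strictly
smaller cost than `hρ`. -/
def Eset (G : QGame P V) (Pr : List V → V → Set (ℕ → V)) (h : List V) :
    Set (ℕ → V) :=
  {ρ | ∃ n v', G.E (ρ n) v' ∧ v' ≠ ρ (n + 1) ∧
      ∀ ρ' ∈ Pr (h ++ playPrefix ρ (n + 1)) v',
        G.cost (G.owner (ρ n)) (prepend (h ++ playPrefix ρ (n + 1)) ρ') <
          G.cost (G.owner (ρ n)) (prepend h ρ)}

/-- The transfinite sequence `P_α(hv)` of sets of potential outcomes of weak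
Nash equilibria in the subgame `(G|_h, v)`: all plays at stage `0`, removal
of `E_α` at successors, intersections at limits. -/
def Pset (G : QGame P V) (α : Ordinal) : List V → V → Set (ℕ → V) :=
  Ordinal.limitRecOn (motive := fun _ => List V → V → Set (ℕ → V)) α
    (fun _h v => {ρ | G.IsPlay ρ ∧ ρ 0 = v})
    (fun _ Pr => fun h v => Pr h v \ G.Eset Pr h)
    (fun α _ Pr => fun h v => ⋂ (β : Ordinal) (hβ : β < α), Pr β hβ h v)

/-- A sequence of plays converges to `ρ` (in the product topology on `V^ω`
with `V` discrete) iff every finite prefix of `ρ` is eventually a prefix of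
the members of the sequence. -/
def Converges (ρs : ℕ → ℕ → V) (ρ : ℕ → V) : Prop :=
  ∀ m, ∃ N, ∀ n ≥ N, ∀ k ≤ m, ρs n k = ρ k

/-- Upper semicontinuity of a cost function on plays. -/
def USCcost (G : QGame P V) (c : (ℕ → V) → EReal) : Prop :=
  ∀ (ρs : ℕ → ℕ → V) (ρ : ℕ → V), (∀ n, G.IsPlay (ρs n)) → G.IsPlay ρ →
    Converges ρs ρ →
      Filter.limsup (fun n => c (ρs n)) Filter.atTop ≤ c ρ

/-- A strategy (profile) is finite-memory if it is computed by a Moore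
machine: a finite set `M` of memory states, updated while reading the
history, determines the move. -/
def FinMem (σ : Strat P V) : Prop :=
  ∃ (M : Type) (_ : Finite M) (m0 : M) (upd : M → V → M) (act : M → V → V),
    ∀ h v, σ h v = act (h.foldl upd m0) v

/-- Quantitative reachability cost: the least index at which `ρ` visits the
target set `T`, and `+∞` if `T` is never visited. -/
def reachCost (T : Set V) (ρ : ℕ → V) : EReal :=
  if h : ∃ n, ρ n ∈ T then ((Nat.find h : ℕ) : EReal) else ⊤

/-- `G` is a quantitative reachability game with target sets `T i`. -/
def IsReachGame (G : QGame P V) (T : P → Set V) : Prop :=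
  ∀ i ρ, G.cost i ρ = reachCost (T i) ρ

/-- The set of players that have not visited their target set along the
history `h`. -/
def Iset (T : P → Set V) (h : List V) : Set P := {i | ∀ u ∈ h, u ∉ T i}

end QGame

open QGame

/-- The two-player game of Figure 3: vertices `0 = v₀` (player `0`),
`1 = v₁` (player `1`), `2 = v₂`, `3 = v₃`; edges `v₀→v₁`, `v₀→v₂`,
`v₁→v₀`, `v₁→v₃`, `v₂→v₂`, `v₃→v₃`; a play ending in `v₂^ω` costs `(1,2)`,
a play ending in `v₃^ω` costs `(0,1)`, and the play `(v₀v₁)^ω` costs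
`(2,0)`. -/
noncomputable def exGame : QGame (Fin 2) (Fin 4) where
  owner := fun v => if v = 1 then 1 else 0
  E := fun a b =>
    (a = 0 ∧ (b = 1 ∨ b = 2)) ∨ (a = 1 ∧ (b = 0 ∨ b = 3)) ∨
    (a = 2 ∧ b = 2) ∨ (a = 3 ∧ b = 3)
  succ_exists := by decide
  cost := fun i ρ =>
    if ∃ N, ∀ n ≥ N, ρ n = 2 then (if i = 0 then 1 else 2)
    else if ∃ N, ∀ n ≥ N, ρ n = 3 then (if i = 0 then 0 else 1)
    else (if i = 0 then 2 else 0)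

/-! ### Auxiliary general lemmas -/

namespace QGame

section Aux

variable {P V : Type}

lemma outcomeAux_one (σ : Strat P V) (v : V) (n : ℕ) :
    outcomeAux σ v (n + 1) =
      ((outcomeAux σ v n).1 ++ [(outcomeAux σ v n).2],
        σ (outcomeAux σ v n).1 (outcomeAux σ v n).2) := rfl

lemma outcome_succ (σ : Strat P V) (v : V) (n : ℕ) :
    outcome σ v (n + 1) = σ (outcomeAux σ v n).1 (outcome σ v n) := rfl

lemma outcome_isPlay {G : QGame P V} {σ : Strat P V} (hσ : G.Valid σ) (v : V) :
    G.IsPlay (outcome σ v) := fun n => hσ _ _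

lemma subStrat_valid {G : QGame P V} {σ : Strat P V} (hσ : G.Valid σ) (h : List V) :
    G.Valid (subStrat σ h) := fun g v => hσ (h ++ g) v

lemma devProf_valid {G : QGame P V} {σ τ : Strat P V} (hσ : G.Valid σ)
    (hτ : G.Valid τ) (i : P) : G.Valid (G.devProf σ τ i) := fun h v => by
  unfold devProf
  split
  · exact hτ h v
  · exact hσ h v

lemma devProf_apply (G : QGame P V) (σ τ : Strat P V) (i : P) (h : List V) (v : V) :
    G.devProf σ τ i h v = if G.owner v = i then τ h v else σ h v := rfl

lemma outcomeAux_add (σ : Strat P V) (v : V) (n : ℕ) : ∀ k,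
    outcomeAux σ v (n + k) =
      ((outcomeAux σ v n).1 ++
          (outcomeAux (subStrat σ (outcomeAux σ v n).1) (outcomeAux σ v n).2 k).1,
        (outcomeAux (subStrat σ (outcomeAux σ v n).1) (outcomeAux σ v n).2 k).2)
  | 0 => by simp [outcomeAux]
  | (k + 1) => by
      rw [show n + (k + 1) = (n + k) + 1 from rfl, outcomeAux_one,
        outcomeAux_add σ v n k, outcomeAux_one]
      simp [subStrat, List.append_assoc]

lemma outcome_add (σ : Strat P V) (v : V) (n k : ℕ) :
    outcome σ v (n + k) =
      outcome (subStrat σ (outcomeAux σ v n).1) (outcome σ v n) k := by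
  unfold outcome
  rw [outcomeAux_add]

lemma isHist_extend {G : QGame P V} {v0 v w : V} {h : List V}
    (hh : G.IsHist v0 h v) (hE : G.E v w) : G.IsHist v0 (h ++ [v]) w := by
  obtain ⟨h1, h2⟩ := hh
  constructor
  · rw [List.head?_append_of_ne_nil (h ++ [v]) (by simp)]
    exact h1
  · unfold List.Chain' at h2 ⊢
    rw [List.isChain_append]
    refine ⟨h2, List.isChain_singleton w, ?_⟩
    intro x hx y hy
    rw [List.getLast?_concat] at hx
    simp only [List.head?_cons, Option.mem_def, Option.some.injEq] at hx hy
    rwa [hx, hy] at hE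

lemma isHist_outcome {G : QGame P V} {σ : Strat P V} (hσ : G.Valid σ) {v0 v : V}
    {h : List V} (hh : G.IsHist v0 h v) :
    ∀ n, G.IsHist v0 (h ++ (outcomeAux σ v n).1) (outcome σ v n)
  | 0 => by simpa [outcomeAux, outcome] using hh
  | (n + 1) => by
      rw [outcomeAux_one, ← List.append_assoc]
      exact isHist_extend (isHist_outcome hσ hh n) (outcome_isPlay hσ v n)

end Aux

end QGame

/-! ### Facts about the example game -/

/-- `ρ` eventually stays at `c`. -/
def Ev (c : Fin 4) (ρ : ℕ → Fin 4) : Prop := ∃ N, ∀ n ≥ N, ρ n = c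

lemma exGame_cost (i : Fin 2) (ρ : ℕ → Fin 4) :
    exGame.cost i ρ =
      if Ev 2 ρ then (if i = 0 then 1 else 2)
      else if Ev 3 ρ then (if i = 0 then 0 else 1)
      else (if i = 0 then 2 else 0) := rfl

lemma exGame_E_def :
    exGame.E = fun a b =>
      (a = 0 ∧ (b = 1 ∨ b = 2)) ∨ (a = 1 ∧ (b = 0 ∨ b = 3)) ∨
      (a = 2 ∧ b = 2) ∨ (a = 3 ∧ b = 3) := rfl

lemma exGame_owner (v : Fin 4) : exGame.owner v = if v = 1 then 1 else 0 := rfl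

lemma Ev_unique {a b : Fin 4} {ρ : ℕ → Fin 4} (ha : Ev a ρ) (hb : Ev b ρ) :
    a = b := by
  obtain ⟨N, hN⟩ := ha
  obtain ⟨M, hM⟩ := hb
  rw [← hN (max N M) (le_max_left _ _), hM (max N M) (le_max_right _ _)]

lemma Ev_prepend (h : List (Fin 4)) (ρ : ℕ → Fin 4) (c : Fin 4) :
    Ev c (QGame.prepend h ρ) ↔ Ev c ρ := by
  constructor
  · rintro ⟨N, hN⟩
    refine ⟨N, fun n hn => ?_⟩
    have := hN (n + h.length) (hn.trans (Nat.le_add_right n _))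
    rwa [QGame.prepend, dif_neg (by omega), Nat.add_sub_cancel] at this
  · rintro ⟨N, hN⟩
    refine ⟨N + h.length, fun n hn => ?_⟩
    rw [QGame.prepend, dif_neg (by omega)]
    exact hN (n - h.length) (by omega)

lemma cost_prepend (i : Fin 2) (h : List (Fin 4)) (ρ : ℕ → Fin 4) :
    exGame.cost i (QGame.prepend h ρ) = exGame.cost i ρ := by
  rw [exGame_cost, exGame_cost]
  by_cases h2 : Ev 2 ρ
  · rw [if_pos ((Ev_prepend h ρ 2).2 h2), if_pos h2]
  · rw [if_neg (fun hc => h2 ((Ev_prepend h ρ 2).1 hc)), if_neg h2]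
    by_cases h3 : Ev 3 ρ
    · rw [if_pos ((Ev_prepend h ρ 3).2 h3), if_pos h3]
    · rw [if_neg (fun hc => h3 ((Ev_prepend h ρ 3).1 hc)), if_neg h3]

lemma cost_of_ev2 {ρ : ℕ → Fin 4} (h2 : Ev 2 ρ) (i : Fin 2) :
    exGame.cost i ρ = if i = 0 then 1 else 2 := by
  rw [exGame_cost, if_pos h2]

lemma cost_of_ev3 {ρ : ℕ → Fin 4} (h3 : Ev 3 ρ) (i : Fin 2) :
    exGame.cost i ρ = if i = 0 then 0 else 1 := by
  rw [exGame_cost, if_neg, if_pos h3]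
  intro h2
  exact absurd (Ev_unique h2 h3) (by decide)

lemma cost_of_cycle {ρ : ℕ → Fin 4} (h2 : ¬ Ev 2 ρ) (h3 : ¬ Ev 3 ρ) (i : Fin 2) :
    exGame.cost i ρ = if i = 0 then 2 else 0 := by
  rw [exGame_cost, if_neg h2, if_neg h3]

lemma cost_nonneg (i : Fin 2) (ρ : ℕ → Fin 4) : 0 ≤ exGame.cost i ρ := by
  rw [exGame_cost]
  split_ifs <;> norm_num

lemma fin4_cases (x : Fin 4) : x = 0 ∨ x = 1 ∨ x = 2 ∨ x = 3 := by
  fin_cases x <;> simp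

lemma E_from0 : ∀ x : Fin 4, exGame.E 0 x → x = 1 ∨ x = 2 := by
  simp only [exGame_E_def]; decide

lemma E_from1 : ∀ x : Fin 4, exGame.E 1 x → x = 0 ∨ x = 3 := by
  simp only [exGame_E_def]; decide

lemma E_from2 : ∀ x : Fin 4, exGame.E 2 x → x = 2 := by
  simp only [exGame_E_def]; decide

lemma E_from3 : ∀ x : Fin 4, exGame.E 3 x → x = 3 := by
  simp only [exGame_E_def]; decide

lemma play_absorb {ρ : ℕ → Fin 4} (hρ : exGame.IsPlay ρ) {c : Fin 4}
    (hc : c = 2 ∨ c = 3) {n : ℕ} (hn : ρ n = c) : ∀ m ≥ n, ρ m = c := by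
  intro m hm
  induction m, hm using Nat.le_induction with
  | base => exact hn
  | succ m _ ih =>
      have := hρ m
      rw [ih] at this
      rcases hc with rfl | rfl
      · exact E_from2 _ this
      · exact E_from3 _ this

lemma ev_of_hit {π : Strat (Fin 2) (Fin 4)} (pval : exGame.Valid π) {v c : Fin 4}
    {n : ℕ} (hc : c = 2 ∨ c = 3) (h : QGame.outcome π v n = c) :
    Ev c (QGame.outcome π v) :=
  ⟨n, play_absorb (QGame.outcome_isPlay pval v) hc h⟩

/-! ### The weak SPE -/

/-- The stationary move map: `v₀ ↦ v₁`, `v₁ ↦ v₃`, `v₂ ↦ v₂`, `v₃ ↦ v₃`. -/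
def nxt : Fin 4 → Fin 4 := fun v => if v = 0 then 1 else if v = 1 then 3 else v

/-- The stationary profile realizing the weak SPE. -/
def sstar : Strat (Fin 2) (Fin 4) := fun _ v => nxt v

lemma sstar_valid : exGame.Valid sstar := by
  have : ∀ v : Fin 4, exGame.E v (nxt v) := by
    simp only [exGame_E_def]; decide
  exact fun h v => this v

/-- A strategy that moves `v₀ ↦ v₂` (and otherwise like `nxt`). -/
def tau2 : Strat (Fin 2) (Fin 4) := fun _ v => if v = 0 then 2 else nxt v

lemma tau2_valid : exGame.Valid tau2 := by
  have : ∀ v : Fin 4, exGame.E v (if v = 0 then 2 else nxt v) := by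
    simp only [exGame_E_def]; decide
  exact fun h v => this v

/-- A strategy that moves `v₁ ↦ v₀` (and otherwise like `nxt`). -/
def tau4 : Strat (Fin 2) (Fin 4) := fun _ v => if v = 1 then 0 else nxt v

lemma tau4_valid : exGame.Valid tau4 := by
  have : ∀ v : Fin 4, exGame.E v (if v = 1 then 0 else nxt v) := by
    simp only [exGame_E_def]; decide
  exact fun h v => this v

lemma sstar_outcome_ev3 {v : Fin 4} (hv : v = 0 ∨ v = 1) :
    Ev 3 (QGame.outcome sstar v) := by
  have h2 : QGame.outcome sstar v 2 = 3 := by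
    rcases hv with rfl | rfl <;> rfl
  exact ev_of_hit sstar_valid (Or.inr rfl) h2

lemma fin2_cases (i : Fin 2) : i = 0 ∨ i = 1 := by omega

lemma sstar_reach {v : Fin 4} (hv : v = 0 ∨ v = 1) (τ : Strat (Fin 2) (Fin 4))
    (tv : exGame.Valid τ) (fdev : exGame.FinDev sstar τ 1 v) :
    ∃ n c, (c = 2 ∨ c = 3) ∧ QGame.outcome (exGame.devProf sstar τ 1) v n = c := by
  set π := exGame.devProf sstar τ 1 with hπ
  have pval : exGame.Valid π := QGame.devProf_valid sstar_valid tv 1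
  by_contra hno
  push_neg at hno
  have h01 : ∀ n, QGame.outcome π v n = 0 ∨ QGame.outcome π v n = 1 := by
    intro n
    rcases fin4_cases (QGame.outcome π v n) with h | h | h | h
    · exact Or.inl h
    · exact Or.inr h
    · exact absurd h (hno n 2 (Or.inl rfl))
    · exact absurd h (hno n 3 (Or.inr rfl))
  obtain ⟨N, hN⟩ := fdev.bddAbove
  have hex : ∃ n, n > N ∧ QGame.outcome π v n = 1 := by
    rcases h01 (N + 1) with h | h
    · refine ⟨N + 2, by omega, ?_⟩
      have hstep := QGame.outcome_isPlay pval v (N + 1)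
      rw [h] at hstep
      rcases E_from0 _ hstep with h' | h'
      · exact h'
      · exact absurd h' (hno (N + 2) 2 (Or.inl rfl))
    · exact ⟨N + 1, by omega, h⟩
  obtain ⟨n, hnN, hn1⟩ := hex
  have hmem : n ∉ exGame.devSteps sstar τ 1 v := fun hc => absurd (hN hc) (by omega)
  have howner : exGame.owner (QGame.outcome π v n) = 1 := by rw [hn1]; rfl
  have heq : sstar (QGame.outcomeAux π v n).1 (QGame.outcome π v n) =
      τ (QGame.outcomeAux π v n).1 (QGame.outcome π v n) := by
    by_contra hne
    exact hmem ⟨howner, hne⟩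
  have h3 : QGame.outcome π v (n + 1) = 3 := by
    rw [QGame.outcome_succ]
    show exGame.devProf sstar τ 1 _ _ = 3
    rw [QGame.devProf_apply, if_pos howner, ← heq, hn1]
    rfl
  exact absurd h3 (hno (n + 1) 3 (Or.inr rfl))

lemma sstar_weak01 {v : Fin 4} (hv : v = 0 ∨ v = 1) (i : Fin 2)
    (τ : Strat (Fin 2) (Fin 4)) (tv : exGame.Valid τ)
    (fdev : exGame.FinDev sstar τ i v) :
    exGame.cost i (QGame.outcome sstar v) ≤
      exGame.cost i (QGame.outcome (exGame.devProf sstar τ i) v) := by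
  rw [cost_of_ev3 (sstar_outcome_ev3 hv)]
  rcases fin2_cases i with rfl | rfl
  · rw [if_pos rfl]
    exact cost_nonneg _ _
  · rw [if_neg (by decide)]
    have pval : exGame.Valid (exGame.devProf sstar τ 1) :=
      QGame.devProf_valid sstar_valid tv 1
    obtain ⟨n, c, hc, hn⟩ := sstar_reach hv τ tv fdev
    have hev := ev_of_hit pval hc hn
    rcases hc with rfl | rfl
    · rw [cost_of_ev2 hev, if_neg (by decide)]
      exact one_le_two
    · rw [cost_of_ev3 hev, if_neg (by decide)]

lemma sstar_weak (v : Fin 4) (i : Fin 2) (τ : Strat (Fin 2) (Fin 4))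
    (tv : exGame.Valid τ) (fdev : exGame.FinDev sstar τ i v) :
    exGame.cost i (QGame.outcome sstar v) ≤
      exGame.cost i (QGame.outcome (exGame.devProf sstar τ i) v) := by
  have pval : exGame.Valid (exGame.devProf sstar τ i) :=
    QGame.devProf_valid sstar_valid tv i
  rcases fin4_cases v with rfl | rfl | rfl | rfl
  · exact sstar_weak01 (Or.inl rfl) i τ tv fdev
  · exact sstar_weak01 (Or.inr rfl) i τ tv fdev
  · rw [cost_of_ev2 (ev_of_hit sstar_valid (Or.inl rfl)
        (rfl : QGame.outcome sstar 2 0 = 2)),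
      cost_of_ev2 (ev_of_hit pval (Or.inl rfl)
        (rfl : QGame.outcome (exGame.devProf sstar τ i) 2 0 = 2))]
  · rw [cost_of_ev3 (ev_of_hit sstar_valid (Or.inr rfl)
        (rfl : QGame.outcome sstar 3 0 = 3)),
      cost_of_ev3 (ev_of_hit pval (Or.inr rfl)
        (rfl : QGame.outcome (exGame.devProf sstar τ i) 3 0 = 3))]

lemma sstar_weakSPE : exGame.IsWeakSPE 0 sstar := by
  intro h v _ i τ tv fdev
  have hsub : QGame.subStrat sstar h = sstar := rfl
  rw [hsub] at fdev ⊢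
  show exGame.cost i (QGame.prepend h (QGame.outcome sstar v)) ≤
    exGame.cost i (QGame.prepend h (QGame.outcome (exGame.devProf sstar τ i) v))
  rw [cost_prepend, cost_prepend]
  exact sstar_weak v i τ tv fdev

/-! ### More computation helpers -/

namespace QGame

variable {P V : Type}

lemma subStrat_apply (σ : Strat P V) (h g : List V) (v : V) :
    subStrat σ h g v = σ (h ++ g) v := rfl

lemma subStrat_subStrat (σ : Strat P V) (h g : List V) :
    subStrat (subStrat σ h) g = subStrat σ (h ++ g) := by
  funext l v
  simp [subStrat, List.append_assoc]

lemma outcomeAux_fst (σ : Strat P V) (v : V) (n : ℕ) :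
    (outcomeAux σ v (n + 1)).1 = (outcomeAux σ v n).1 ++ [outcome σ v n] := rfl

end QGame

lemma outcome_one (σ' : Strat (Fin 2) (Fin 4)) (v : Fin 4) :
    QGame.outcome σ' v 1 = σ' [] v := rfl

lemma outcome_two (σ' : Strat (Fin 2) (Fin 4)) (v : Fin 4) :
    QGame.outcome σ' v 2 = σ' [v] (σ' [] v) := rfl

lemma devProf_at (σ' τ : Strat (Fin 2) (Fin 4)) (i : Fin 2) (v : Fin 4)
    (hv : exGame.owner v = i) {A : List (Fin 4)} :
    exGame.devProf σ' τ i A v = τ A v := by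
  rw [QGame.devProf_apply, if_pos hv]

lemma devProf_at' (σ' τ : Strat (Fin 2) (Fin 4)) (i : Fin 2) (v : Fin 4)
    (hv : ¬ exGame.owner v = i) {A : List (Fin 4)} :
    exGame.devProf σ' τ i A v = σ' A v := by
  rw [QGame.devProf_apply, if_neg hv]

lemma EReal_two_not_le_one : ¬ ((2:EReal) ≤ 1) := by
  exact_mod_cast (by norm_num : ¬ ((2:ℝ) ≤ 1))

lemma EReal_two_not_le_zero : ¬ ((2:EReal) ≤ 0) := by
  exact_mod_cast (by norm_num : ¬ ((2:ℝ) ≤ 0))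

lemma EReal_one_not_le_zero : ¬ ((1:EReal) ≤ 0) := by
  exact_mod_cast (by norm_num : ¬ ((1:ℝ) ≤ 0))

/-! ### No SPE -/

section NoSPE

variable {σ : Strat (Fin 2) (Fin 4)}

/-- In every subgame rooted at a history, `σ` is a Nash equilibrium for the
(unprepended) costs. -/
def NEhyp (σ : Strat (Fin 2) (Fin 4)) : Prop :=
  ∀ h (v : Fin 4), exGame.IsHist 0 h v → ∀ (i : Fin 2) (τ : Strat (Fin 2) (Fin 4)),
    exGame.Valid τ →
      exGame.cost i (QGame.outcome (QGame.subStrat σ h) v) ≤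
        exGame.cost i (QGame.outcome (exGame.devProf (QGame.subStrat σ h) τ i) v)

lemma NEhyp_of_SPE (hspe : exGame.IsSPE 0 σ) : NEhyp σ := by
  intro h v hh i τ tv
  have := hspe h v hh i τ tv
  simpa only [QGame.subCost, cost_prepend] using this

lemma stepA (hval : exGame.Valid σ) (hNE : NEhyp σ) :
    ∀ h (v : Fin 4), exGame.IsHist 0 h v → v = 0 ∨ v = 1 →
      Ev 2 (QGame.outcome (QGame.subStrat σ h) v) ∨
      Ev 3 (QGame.outcome (QGame.subStrat σ h) v) := by
  intro h v hh hv
  by_contra hcon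
  push_neg at hcon
  have hSval : exGame.Valid (QGame.subStrat σ h) := QGame.subStrat_valid hval h
  have pval : exGame.Valid (exGame.devProf (QGame.subStrat σ h) tau2 0) :=
    QGame.devProf_valid hSval tau2_valid 0
  have hne := hNE h v hh 0 tau2 tau2_valid
  rw [cost_of_cycle hcon.1 hcon.2, if_pos (rfl : (0:Fin 2) = 0)] at hne
  have hdev : Ev 2 (QGame.outcome (exGame.devProf (QGame.subStrat σ h) tau2 0) v) ∨
      Ev 3 (QGame.outcome (exGame.devProf (QGame.subStrat σ h) tau2 0) v) := by
    rcases hv with rfl | rfl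
    · left
      refine ev_of_hit pval (Or.inl rfl) (n := 1) ?_
      rw [outcome_one, devProf_at (QGame.subStrat σ h) tau2 0 0 rfl]
      rfl
    · have hw1 : QGame.outcome (exGame.devProf (QGame.subStrat σ h) tau2 0) 1 1 =
          QGame.subStrat σ h [] 1 := by
        rw [outcome_one, devProf_at' (QGame.subStrat σ h) tau2 0 1 (by decide)]
      rcases E_from1 _ (hSval [] 1) with hw | hw
      · left
        refine ev_of_hit pval (Or.inl rfl) (n := 2) ?_
        rw [outcome_two, devProf_at' (QGame.subStrat σ h) tau2 0 1 (by decide), hw,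
          devProf_at (QGame.subStrat σ h) tau2 0 0 rfl]
        rfl
      · right
        exact ev_of_hit pval (Or.inr rfl) (hw1.trans hw)
  rcases hdev with h2 | h2
  · rw [cost_of_ev2 h2, if_pos (rfl : (0:Fin 2) = 0)] at hne
    exact EReal_two_not_le_one hne
  · rw [cost_of_ev3 h2, if_pos (rfl : (0:Fin 2) = 0)] at hne
    exact EReal_two_not_le_zero hne

lemma stepB (hval : exGame.Valid σ) (hNE : NEhyp σ) :
    ∀ h, exGame.IsHist 0 h 1 → Ev 3 (QGame.outcome (QGame.subStrat σ h) 1) := by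
  intro h hh
  rcases stepA hval hNE h 1 hh (Or.inr rfl) with h2 | h3
  · exfalso
    have hSval : exGame.Valid (QGame.subStrat σ h) := QGame.subStrat_valid hval h
    have pval : exGame.Valid (exGame.devProf (QGame.subStrat σ h) sstar 1) :=
      QGame.devProf_valid hSval sstar_valid 1
    have hne := hNE h 1 hh 1 sstar sstar_valid
    have h3' : Ev 3 (QGame.outcome (exGame.devProf (QGame.subStrat σ h) sstar 1) 1) := by
      refine ev_of_hit pval (Or.inr rfl) (n := 1) ?_
      rw [outcome_one, devProf_at (QGame.subStrat σ h) sstar 1 1 rfl]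
      rfl
    rw [cost_of_ev2 h2, if_neg (by decide : ¬ ((1:Fin 2) = 0)), cost_of_ev3 h3',
      if_neg (by decide : ¬ ((1:Fin 2) = 0))] at hne
    exact EReal_two_not_le_one hne
  · exact h3

lemma stepE (hval : exGame.Valid σ) (hNE : NEhyp σ) :
    ∀ h, exGame.IsHist 0 h 0 → σ h 0 = 1 := by
  intro h hh
  rcases E_from0 _ (hval h 0) with h1 | h2
  · exact h1
  exfalso
  have hSval : exGame.Valid (QGame.subStrat σ h) := QGame.subStrat_valid hval h
  have pval : exGame.Valid (exGame.devProf (QGame.subStrat σ h) sstar 0) :=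
    QGame.devProf_valid hSval sstar_valid 0
  -- the σ-outcome from (h, v₀) goes to v₂ and stays there: cost 1 for player 0
  have hO1 : QGame.outcome (QGame.subStrat σ h) 0 1 = 2 := by
    rw [outcome_one, QGame.subStrat_apply, List.append_nil]
    exact h2
  have hOev : Ev 2 (QGame.outcome (QGame.subStrat σ h) 0) :=
    ev_of_hit hSval (Or.inl rfl) hO1
  have hne := hNE h 0 hh 0 sstar sstar_valid
  rw [cost_of_ev2 hOev, if_pos (rfl : (0:Fin 2) = 0)] at hne
  -- the subgame after (h ++ [v₀], v₁)
  have hh' : exGame.IsHist 0 (h ++ [0]) 1 :=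
    QGame.isHist_extend hh (by simp [exGame_E_def])
  have hB := stepB hval hNE (h ++ [0]) hh'
  -- the deviated play (player 0 switches to `sstar`) eventually stays at v₃
  have hEv3 : Ev 3 (QGame.outcome (exGame.devProf (QGame.subStrat σ h) sstar 0) 0) := by
    by_contra hn3
    -- the deviated play stays in {v₀, v₁}
    have h01 : ∀ n, QGame.outcome (exGame.devProf (QGame.subStrat σ h) sstar 0) 0 n = 0 ∨
        QGame.outcome (exGame.devProf (QGame.subStrat σ h) sstar 0) 0 n = 1 := by
      intro n
      induction n with
      | zero => exact Or.inl rfl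
      | succ n ih =>
          rcases ih with h0 | h1
          · right
            rw [QGame.outcome_succ, h0, devProf_at (QGame.subStrat σ h) sstar 0 0 rfl]
            rfl
          · have hnext : QGame.outcome (exGame.devProf (QGame.subStrat σ h) sstar 0) 0 (n+1) =
                QGame.subStrat σ h
                  (QGame.outcomeAux (exGame.devProf (QGame.subStrat σ h) sstar 0) 0 n).1 1 := by
              rw [QGame.outcome_succ, h1,
                devProf_at' (QGame.subStrat σ h) sstar 0 1 (by decide)]
            rcases E_from1 _ (hSval _ 1) with e | e
            · exact Or.inl (hnext.trans e)
            · exact absurd (ev_of_hit pval (Or.inr rfl) (hnext.trans e)) hn3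
    -- alignment of the subgame play from (h ++ [v₀], v₁) with the deviated play
    have halign : ∀ n,
        QGame.outcome (QGame.subStrat σ (h ++ [0])) 1 n =
          QGame.outcome (exGame.devProf (QGame.subStrat σ h) sstar 0) 0 (n + 1) ∧
        (0 : Fin 4) :: (QGame.outcomeAux (QGame.subStrat σ (h ++ [0])) 1 n).1 =
          (QGame.outcomeAux (exGame.devProf (QGame.subStrat σ h) sstar 0) 0 (n + 1)).1 := by
      intro n
      induction n with
      | zero =>
          constructor
          · have : QGame.outcome (exGame.devProf (QGame.subStrat σ h) sstar 0) 0 (0 + 1) = 1 := by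
              rw [show (0 + 1) = 1 from rfl, outcome_one,
                devProf_at (QGame.subStrat σ h) sstar 0 0 rfl]
              rfl
            exact this.symm
          · rfl
      | succ n ih =>
          obtain ⟨e1, e2⟩ := ih
          have hhist : (h ++ [0]) ++
              (QGame.outcomeAux (QGame.subStrat σ (h ++ [0])) 1 n).1 =
              h ++ (QGame.outcomeAux (exGame.devProf (QGame.subStrat σ h) sstar 0) 0 (n + 1)).1 := by
            rw [List.append_assoc, ← e2]
            rfl
          constructor
          · rcases h01 (n + 1) with hcase | hcase
            · -- the current vertex is v₀
              have hmove : σ (h ++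
                  (QGame.outcomeAux (exGame.devProf (QGame.subStrat σ h) sstar 0) 0 (n + 1)).1) 0 = 1 := by
                rcases E_from0 _ (hval _ 0) with e | e
                · exact e
                · exfalso
                  have h0' : QGame.outcome (QGame.subStrat σ (h ++ [0])) 1 n = 0 :=
                    e1.trans hcase
                  have hhit : QGame.outcome (QGame.subStrat σ (h ++
                      (QGame.outcomeAux (exGame.devProf (QGame.subStrat σ h) sstar 0) 0 (n + 1)).1)) 0 1 = 2 := by
                    rw [outcome_one, QGame.subStrat_apply, List.append_nil]
                    exact e
                  have hev2 : Ev 2 (QGame.outcome (QGame.subStrat σ (h ++ [0])) 1) := by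
                    refine ⟨n + 1, fun m hm => ?_⟩
                    have hm' : m = n + (m - n) := by omega
                    rw [hm', QGame.outcome_add, h0', QGame.subStrat_subStrat, hhist]
                    exact play_absorb
                      (QGame.outcome_isPlay (QGame.subStrat_valid hval _) 0)
                      (Or.inl rfl) hhit (m - n) (by omega)
                  exact absurd (Ev_unique hev2 hB) (by decide)
              rw [QGame.outcome_succ (QGame.subStrat σ (h ++ [0])) 1 n,
                QGame.outcome_succ (exGame.devProf (QGame.subStrat σ h) sstar 0) 0 (n + 1),
                e1, hcase, devProf_at (QGame.subStrat σ h) sstar 0 0 rfl,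
                QGame.subStrat_apply, hhist, hmove]
              rfl
            · -- the current vertex is v₁ : both plays follow σ
              rw [QGame.outcome_succ (QGame.subStrat σ (h ++ [0])) 1 n,
                QGame.outcome_succ (exGame.devProf (QGame.subStrat σ h) sstar 0) 0 (n + 1),
                e1, hcase, devProf_at' (QGame.subStrat σ h) sstar 0 1 (by decide),
                QGame.subStrat_apply, QGame.subStrat_apply, hhist]
          · rw [QGame.outcomeAux_fst (QGame.subStrat σ (h ++ [0])) 1 n,
              QGame.outcomeAux_fst (exGame.devProf (QGame.subStrat σ h) sstar 0) 0 (n + 1),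
              e1, ← List.cons_append, e2]
    obtain ⟨N, hN⟩ := hB
    have h3' : QGame.outcome (exGame.devProf (QGame.subStrat σ h) sstar 0) 0 (N + 1) = 3 :=
      ((halign N).1).symm.trans (hN N le_rfl)
    rcases h01 (N + 1) with hx | hx <;> rw [hx] at h3' <;> exact absurd h3' (by decide)
  rw [cost_of_ev3 hEv3, if_pos (rfl : (0:Fin 2) = 0)] at hne
  exact EReal_one_not_le_zero hne

lemma no_SPE_aux (hval : exGame.Valid σ) (hNE : NEhyp σ) : False := by
  have hh0 : exGame.IsHist 0 [] 0 := ⟨rfl, List.isChain_singleton 0⟩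
  have hh1 : exGame.IsHist 0 ([] ++ [0]) 1 :=
    QGame.isHist_extend hh0 (by simp [exGame_E_def])
  rw [List.nil_append] at hh1
  have hB := stepB hval hNE [0] hh1
  have pval : exGame.Valid (exGame.devProf (QGame.subStrat σ [0]) tau4 1) :=
    QGame.devProf_valid (QGame.subStrat_valid hval [0]) tau4_valid 1
  have hne := hNE [0] 1 hh1 1 tau4 tau4_valid
  -- the deviated play (player 1 always moves back to v₀) alternates between v₁ and v₀
  have h01 : ∀ n, QGame.outcome (exGame.devProf (QGame.subStrat σ [0]) tau4 1) 1 n = 0 ∨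
      QGame.outcome (exGame.devProf (QGame.subStrat σ [0]) tau4 1) 1 n = 1 := by
    intro n
    induction n with
    | zero => exact Or.inr rfl
    | succ n ih =>
        rcases ih with h0 | h1
        · right
          have hhn := QGame.isHist_outcome pval hh1 n
          rw [h0] at hhn
          have hmove := stepE hval hNE _ hhn
          rw [QGame.outcome_succ, h0, devProf_at' (QGame.subStrat σ [0]) tau4 1 0 (by decide),
            QGame.subStrat_apply]
          exact hmove
        · left
          rw [QGame.outcome_succ, h1, devProf_at (QGame.subStrat σ [0]) tau4 1 1 rfl]
          rfl
  have hnot2 : ¬ Ev 2 (QGame.outcome (exGame.devProf (QGame.subStrat σ [0]) tau4 1) 1) := by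
    rintro ⟨N, hN⟩
    rcases h01 N with hx | hx <;> rw [hN N le_rfl] at hx <;> exact absurd hx (by decide)
  have hnot3 : ¬ Ev 3 (QGame.outcome (exGame.devProf (QGame.subStrat σ [0]) tau4 1) 1) := by
    rintro ⟨N, hN⟩
    rcases h01 N with hx | hx <;> rw [hN N le_rfl] at hx <;> exact absurd hx (by decide)
  rw [cost_of_ev3 hB, if_neg (by decide : ¬ ((1:Fin 2) = 0)),
    cost_of_cycle hnot2 hnot3, if_neg (by decide : ¬ ((1:Fin 2) = 0))] at hne
  exact EReal_one_not_le_zero hne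

end NoSPE

/-- The game `exGame` initialized at `v₀` admits a weak
subgame perfect equilibrium but no subgame perfect equilibrium.  In
particular, there exists a two-player quantitative game on a finite graph
with a weak SPE but no SPE. -/
theorem exGame_has_weakSPE_but_no_SPE :
    (∃ σ : Strat (Fin 2) (Fin 4), exGame.Valid σ ∧ exGame.IsWeakSPE 0 σ) ∧
    ¬ ∃ σ : Strat (Fin 2) (Fin 4), exGame.Valid σ ∧ exGame.IsSPE 0 σ := by
  constructor
  · exact ⟨sstar, sstar_valid, sstar_weakSPE⟩
  · rintro ⟨σ, hval, hspe⟩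
    exact no_SPE_aux hval (NEhyp_of_SPE hspe)
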